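/- Let α and β be ordinals with β ≥ 2. Then α ≲ β if and only if for every ordinal η, β ≤ ω^η implies α ≤ ω^η (where ω^η denotes ordinal exponentiation with base ω). -/

import Mathlib

/-- The coarsening `α ≲ β` of the ordinal order: for every `γ < α` there are `δ < β`
and `n ∈ ℕ` with `γ < δ·n`. -/
def OrdLesssim (a b : Ordinal) : Prop :=
  ∀ γ < a, ∃ δ < b, ∃ n : ℕ, γ < δ * (n : Ordinal)

/-- For ordinals `α`, `β` with `β ≥ 2`: `α ≲ β` iff for every ordinal `η`,
`β ≤ ω^η` implies `α ≤ ω^η`. -/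
theorem ordLesssim_iff_omega_pow (α β : Ordinal) (hβ : 2 ≤ β) :
    OrdLesssim α β ↔ ∀ η : Ordinal, β ≤ Ordinal.omega0 ^ η → α ≤ Ordinal.omega0 ^ η := by
  constructor
  · intro h η hβη
    by_contra hlt
    push_neg at hlt
    obtain ⟨δ, hδ, n, hn⟩ := h _ hlt
    have hδω : δ < Ordinal.omega0 ^ η := hδ.trans_le hβη
    have hmul : ∀ m : ℕ, δ * (m : Ordinal) < Ordinal.omega0 ^ η := by
      intro m
      induction m with
      | zero => simpa using Ordinal.opow_pos η Ordinal.omega0_pos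
      | succ k ih =>
        push_cast
        rw [mul_add, mul_one]
        exact Ordinal.principal_add_omega0_opow η ih hδω
    exact (hn.trans (hmul n)).false
  · intro h γ hγ
    set S : Set Ordinal := {η | β ≤ Ordinal.omega0 ^ η} with hSdef
    have hS : S.Nonempty := ⟨β, Ordinal.right_le_opow β Ordinal.one_lt_omega0⟩
    set η := sInf S with hηdef
    have hηS : β ≤ Ordinal.omega0 ^ η := csInf_mem hS
    have hα : α ≤ Ordinal.omega0 ^ η := h η hηS
    have hmin : ∀ ξ < η, Ordinal.omega0 ^ ξ < β := by
      intro ξ hξ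
      by_contra hc
      push_neg at hc
      exact hξ.not_ge (csInf_le' hc)
    have hη0 : η ≠ 0 := by
      intro h0
      rw [h0, Ordinal.opow_zero] at hηS
      exact absurd (hβ.trans hηS) (by norm_num)
    have hγη : γ < Ordinal.omega0 ^ η := hγ.trans_le hα
    rcases Ordinal.zero_or_succ_or_isSuccLimit η with h0 | ⟨ξ, hsucc⟩ | hlim
    · exact absurd h0 hη0
    · have hξβ : Ordinal.omega0 ^ ξ < β := hmin ξ (hsucc ▸ Order.lt_succ ξ)
      rw [← hsucc, Ordinal.opow_succ] at hγη
      obtain ⟨b', hb', hγb⟩ := (Ordinal.lt_mul_iff_of_isSuccLimit Ordinal.isSuccLimit_omega0).1 hγη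
      obtain ⟨n, rfl⟩ := Ordinal.lt_omega0.1 hb'
      exact ⟨_, hξβ, n, hγb⟩
    · obtain ⟨ξ, hξ, hγξ⟩ := (Ordinal.lt_opow_of_isSuccLimit Ordinal.omega0_ne_zero hlim).1 hγη
      exact ⟨_, hmin ξ hξ, 1, by simpa using hγξ⟩
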